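/- Minimax Approval Voting (MAV) satisfies strong support monotonicity with population increase: if W is a winning MAV committee for E containing a nonempty set G with |G| ≤ k, then W (or another committee containing G) is winning for the election obtained by adding a voter whose ballot is exactly G; formally, if G ⊆ W for some winning W of E then G ⊆ W' for some winning W' of E_{ΔG}, and if G ⊆ W for all winning W of E then G ⊆ W' for all winning W' of E_{ΔG}. -/
import Mathlib


open Finset

variable {C : Type*} [Fintype C] [DecidableEq C]

/-- The Hamming distance between two finite sets. -/
def ham (A B : Finset C) : ℕ := (A \ B).card + (B \ A).card

/-- The MAV cost of `W`: the maximum Hamming distance between `W` and a ballot. -/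
def mavCost {V : Type*} [Fintype V] (A : V → Finset C) (W : Finset C) : ℕ :=
  univ.sup fun i : V => ham W (A i)

/-- `W` is a winning committee of Minimax Approval Voting for `(A, k)`. -/
def isMAVWinner {V : Type*} [Fintype V] (A : V → Finset C) (k : ℕ) (W : Finset C) : Prop :=
  W.card = k ∧ ∀ W' : Finset C, W'.card = k → mavCost A W ≤ mavCost A W'

lemma card_sdiff_ge (W G : Finset C) : W.card - G.card ≤ (W \ G).card := by
  have h1 : (W \ G).card + G.card = (W ∪ G).card := by
    rw [card_sdiff_add_card]
  have h2 : W.card ≤ (W ∪ G).card := card_le_card subset_union_left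
  omega

lemma ham_lower (W G : Finset C) : W.card - G.card ≤ ham W G := by
  have := card_sdiff_ge W G
  unfold ham; omega

lemma ham_lower2 (W G : Finset C) (hc : G.card ≤ W.card) (h : ¬ G ⊆ W) :
    W.card - G.card + 2 ≤ ham W G := by
  obtain ⟨c, hcG, hcW⟩ := not_subset.mp h
  have h1 : 1 ≤ (G \ W).card := card_pos.mpr ⟨c, mem_sdiff.mpr ⟨hcG, hcW⟩⟩
  have h2 : W.card + 1 ≤ (W ∪ G).card := by
    have : W ⊂ W ∪ G := ssubset_iff_of_subset subset_union_left |>.mpr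
      ⟨c, mem_union_right _ hcG, hcW⟩
    exact card_lt_card this
  have h3 : (W \ G).card + G.card = (W ∪ G).card := card_sdiff_add_card W G
  have h4 : c ∈ G := hcG
  have h5 : 1 ≤ G.card := card_pos.mpr ⟨c, hcG⟩
  unfold ham; omega

lemma ham_sub (W G : Finset C) (h : G ⊆ W) : ham W G = W.card - G.card := by
  unfold ham
  rw [sdiff_eq_empty_iff_subset.mpr h, card_empty, card_sdiff_of_subset h, Nat.add_zero]

section
variable {V : Type*} [Fintype V]

lemma cost'_ge_ham (A : V → Finset C) (G W : Finset C) :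
    ham W G ≤ mavCost (fun v : Option V => v.elim G A) W :=
  le_sup (f := fun i : Option V => ham W (i.elim G A)) (mem_univ none)

lemma cost'_ge_cost (A : V → Finset C) (G W : Finset C) :
    mavCost A W ≤ mavCost (fun v : Option V => v.elim G A) W :=
  Finset.sup_le fun i _ =>
    le_sup (f := fun i : Option V => ham W (i.elim G A)) (mem_univ (some i))

lemma cost'_le (A : V → Finset C) (G W : Finset C) :
    mavCost (fun v : Option V => v.elim G A) W ≤ max (ham W G) (mavCost A W) := by
  unfold mavCost
  refine Finset.sup_le fun i _ => ?_
  cases i with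
  | none => exact le_max_left _ _
  | some v =>
    exact le_max_of_le_right (le_sup (f := fun i : V => ham W (A i)) (mem_univ v))

end

/-- MAV satisfies strong support monotonicity with population increase:
adding one new voter (the `none` voter) whose ballot is exactly `G ⊆ W`. -/
theorem mav_strong_SMWPI {V : Type*} [Fintype V]
    (A : V → Finset C) (k : ℕ) (hk : 1 ≤ k) (hkC : k ≤ Fintype.card C)
    (G : Finset C) (hG : G.Nonempty) (hGk : G.card ≤ k)
    (W : Finset C) (hW : isMAVWinner A k W) (hGW : G ⊆ W) :
    (∃ W' : Finset C, isMAVWinner (fun v : Option V => v.elim G A) k W' ∧ G ⊆ W') ∧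
    ((∀ W₀ : Finset C, isMAVWinner A k W₀ → G ⊆ W₀) →
      ∀ W' : Finset C, isMAVWinner (fun v : Option V => v.elim G A) k W' → G ⊆ W') := by
  obtain ⟨hWk, hWmin⟩ := hW
  have hWwin' : isMAVWinner (fun v : Option V => v.elim G A) k W := by
    refine ⟨hWk, fun W' hW' => ?_⟩
    have h1 := cost'_le A G W
    have h2 := cost'_ge_ham A G W'
    have h3 := cost'_ge_cost A G W'
    have h4 : ham W G = k - G.card := by rw [ham_sub W G hGW, hWk]
    have h5 : k - G.card ≤ ham W' G := by have := ham_lower W' G; rwa [hW'] at this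
    have h6 : mavCost A W ≤ mavCost A W' := hWmin W' hW'
    have := max_le (h4 ▸ h5.trans h2) (h6.trans h3)
    exact h1.trans this
  refine ⟨⟨W, hWwin', hGW⟩, fun hall W' hW' => ?_⟩
  by_contra hnot
  obtain ⟨hW'k, hW'min⟩ := hW'
  have h2 : k - G.card + 2 ≤ ham W' G := by
    have := ham_lower2 W' G (by omega) hnot; rwa [hW'k] at this
  have hle : mavCost (fun v : Option V => v.elim G A) W' ≤
      max (k - G.card) (mavCost A W) := by
    have := hW'min W hWk
    refine this.trans ((cost'_le A G W).trans ?_)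
    rw [ham_sub W G hGW, hWk]
  have hge : k - G.card + 2 ≤ mavCost (fun v : Option V => v.elim G A) W' :=
    h2.trans (cost'_ge_ham A G W')
  have hcW : k - G.card + 2 ≤ mavCost A W := by
    rcases max_cases (k - G.card) (mavCost A W) with ⟨he, _⟩ | ⟨he, _⟩ <;> omega
  -- W' is a winner of the original election
  have hW'win : isMAVWinner A k W' := by
    refine ⟨hW'k, fun W'' hW'' => ?_⟩
    have hcost' : mavCost A W' ≤ mavCost A W := by
      have := (cost'_ge_cost A G W').trans hle
      omega
    exact hcost'.trans (hWmin W'' hW'')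
  exact hnot (hall W' hW'win)
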